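/- If a connected graph G of order n has r even blocks, then n + r is odd; equivalently, n and r have different parities. -/

import Mathlib

open SimpleGraph

def IsRainbowColoring {V α : Type*} (G : SimpleGraph V) (c : Sym2 V → α) : Prop :=
  ∀ u v : V, ∃ p : G.Walk u v, p.IsPath ∧ (p.edges.map c).Nodup

noncomputable def rc {V : Type*} (G : SimpleGraph V) : ℕ :=
  sInf {t : ℕ | ∃ c : Sym2 V → Fin t, IsRainbowColoring G c}

def IsBlock {V : Type*} (G : SimpleGraph V) (B : Set V) : Prop :=
  ((G.induce B).Connected ∧ ∀ v ∈ B, B ≠ {v} → (G.induce (B \ {v})).Connected) ∧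
  ∀ B' : Set V, B ⊆ B' →
    ((G.induce B').Connected ∧ ∀ v ∈ B', B' ≠ {v} → (G.induce (B' \ {v})).Connected) →
    B' = B

def TwoConnected {V : Type*} (G : SimpleGraph V) : Prop :=
  G.Connected ∧ ∀ v : V, (G.induce {u | u ≠ v}).Connected

def TwoEdgeConnected {V : Type*} (G : SimpleGraph V) : Prop :=
  G.Connected ∧ ∀ e ∈ G.edgeSet, (G.deleteEdges {e}).Connected

namespace BlockParity

variable {V : Type*}

/-- The restriction of `G` to a vertex set `A`, as a graph on `V`. -/
def Gr (G : SimpleGraph V) (A : Set V) : SimpleGraph V where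
  Adj u v := G.Adj u v ∧ u ∈ A ∧ v ∈ A
  symm := ⟨fun u v h => ⟨h.1.symm, h.2.2, h.2.1⟩⟩
  loopless := ⟨fun u h => G.loopless.irrefl u h.1⟩

lemma Gr_mono (G : SimpleGraph V) {A A' : Set V} (h : A ⊆ A') : Gr G A ≤ Gr G A' :=
  fun _ _ hadj => ⟨hadj.1, h hadj.2.1, h hadj.2.2⟩

/-- `A` is nonempty and connected inside `G`. -/
def ConnOn (G : SimpleGraph V) (A : Set V) : Prop :=
  A.Nonempty ∧ ∀ u ∈ A, ∀ v ∈ A, (Gr G A).Reachable u v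

/-- The "no cut vertex" property of a candidate block. -/
def Pb (G : SimpleGraph V) (B : Set V) : Prop :=
  ConnOn G B ∧ ∀ v ∈ B, B ≠ {v} → ConnOn G (B \ {v})

/-- `B` is a block of the graph induced on `A`. -/
def BlkOn (G : SimpleGraph V) (A B : Set V) : Prop :=
  B ⊆ A ∧ Pb G B ∧ ∀ B', B' ⊆ A → B ⊆ B' → Pb G B' → B' = B

lemma support_mem {G : SimpleGraph V} {A : Set V} :
    ∀ {u v : V}, (p : (Gr G A).Walk u v) → u ∈ A → ∀ w ∈ p.support, w ∈ A := by
  intro u v p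
  induction p with
  | nil => intro hu w hw; simp at hw; subst hw; exact hu
  | cons h p ih =>
    intro hu w hw
    rw [SimpleGraph.Walk.support_cons] at hw
    rcases List.mem_cons.1 hw with rfl | hw
    · exact hu
    · exact ih h.2.2 w hw

lemma reach_support {H : SimpleGraph V} :
    ∀ {u v : V}, (p : H.Walk u v) → ∀ w ∈ p.support, H.Reachable u w := by
  intro u v p
  induction p with
  | nil => intro w hw; simp at hw; subst hw; exact Reachable.refl _
  | cons h p ih =>
    intro w hw
    rw [SimpleGraph.Walk.support_cons] at hw
    rcases List.mem_cons.1 hw with rfl | hw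
    · exact Reachable.refl _
    · exact (h.reachable).trans (ih w hw)

lemma reach_transfer {G : SimpleGraph V} {A A' : Set V} {u v : V}
    (p : (Gr G A).Walk u v) (hs : ∀ w ∈ p.support, w ∈ A') :
    (Gr G A').Reachable u v := by
  refine ⟨p.transfer (Gr G A') ?_⟩
  intro e he
  induction e using Sym2.ind with
  | _ x y =>
    have hadj : (Gr G A).Adj x y := p.edges_subset_edgeSet he
    exact ⟨hadj.1, hs x (p.fst_mem_support_of_mem_edges he),
      hs y (p.snd_mem_support_of_mem_edges he)⟩

def grHom (G : SimpleGraph V) (A : Set V) : G.induce A →g Gr G A :=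
  ⟨Subtype.val, fun {a b} hab => ⟨hab, a.2, b.2⟩⟩

/-- Bridge: connectivity of the induced subgraph equals `ConnOn`. -/
lemma induce_connected_iff (G : SimpleGraph V) (A : Set V) :
    (G.induce A).Connected ↔ ConnOn G A := by
  rw [SimpleGraph.connected_iff]
  constructor
  · rintro ⟨hp, hne⟩
    refine ⟨Set.nonempty_coe_sort.1 hne, ?_⟩
    intro u hu v hv
    exact (hp ⟨u, hu⟩ ⟨v, hv⟩).map (grHom G A)
  · rintro ⟨hne, hreach⟩
    refine ⟨?_, Set.nonempty_coe_sort.2 hne⟩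
    rintro ⟨u, hu⟩ ⟨v, hv⟩
    obtain ⟨p⟩ := hreach u hu v hv
    clear hreach
    induction p with
    | nil => exact Reachable.refl _
    | @cons a b c h p ih =>
      have hadj : (G.induce A).Adj ⟨a, h.2.1⟩ ⟨b, h.2.2⟩ := by exact h.1
      exact hadj.reachable.trans (ih h.2.2 hv)

lemma prefix_reach {G : SimpleGraph V} {A : Set V} {x v : V}
    (hA : ConnOn G A) (hx : x ∈ A) (hv : v ∈ A) :
    ∃ q : (Gr G A).Walk x v, ∀ w ∈ q.support,
      w = v ∨ (w ∈ A ∧ w ≠ v ∧ (Gr G (A \ {v})).Reachable x w) := by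
  classical
  obtain ⟨p⟩ := hA.2 x hx v hv
  refine ⟨p.takeUntil v p.end_mem_support, ?_⟩
  set q := p.takeUntil v p.end_mem_support with hq
  have hcount : q.support.count v = 1 := p.count_support_takeUntil_eq_one _
  intro w hw
  by_cases hwv : w = v
  · exact Or.inl hwv
  right
  have hwA : w ∈ A := support_mem q hx w hw
  refine ⟨hwA, hwv, ?_⟩
  have hvq : v ∉ (q.takeUntil w hw).support := by
    intro hvmem
    have hsupp : q.support = (q.takeUntil w hw).support ++ (q.dropUntil w hw).support.tail := by
      rw [← SimpleGraph.Walk.support_append, q.take_spec hw]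
    have hdrop : v ∈ (q.dropUntil w hw).support.tail := by
      have hv2 : v ∈ (q.dropUntil w hw).support := SimpleGraph.Walk.end_mem_support _
      rw [SimpleGraph.Walk.support_eq_cons (q.dropUntil w hw)] at hv2
      rcases List.mem_cons.1 hv2 with h1 | h1
      · exact (hwv h1.symm).elim
      · exact h1
    have h1 : 0 < (q.takeUntil w hw).support.count v := List.count_pos_iff.mpr hvmem
    have h2 : 0 < ((q.dropUntil w hw).support.tail).count v := List.count_pos_iff.mpr hdrop
    rw [hsupp, List.count_append] at hcount
    omega
  refine reach_transfer (q.takeUntil w hw) (fun z hz => ?_)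
  refine ⟨support_mem q hx z (q.support_takeUntil_subset hw hz), ?_⟩
  simp only [Set.mem_singleton_iff]
  rintro rfl
  exact hvq hz

lemma connOn_singleton (G : SimpleGraph V) (x : V) : ConnOn G {x} := by
  refine ⟨⟨x, rfl⟩, ?_⟩
  rintro u (rfl : u = x) w (rfl : w = u)
  exact Reachable.refl _

lemma connOn_pair {G : SimpleGraph V} {x y : V} (h : G.Adj x y) : ConnOn G {x, y} := by
  refine ⟨⟨x, Or.inl rfl⟩, ?_⟩
  have hadj : (Gr G {x, y}).Adj x y := ⟨h, Or.inl rfl, Or.inr rfl⟩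
  rintro u (rfl | rfl) w (rfl | rfl)
  · exact Reachable.refl _
  · exact hadj.reachable
  · exact hadj.reachable.symm
  · exact Reachable.refl _

lemma singleton_not_blk {G : SimpleGraph V} {X : Set V} {v w : V}
    (hX : ConnOn G X) (hv : v ∈ X) (hw : w ∈ X) (hvw : w ≠ v) :
    ¬ BlkOn G X {v} := by
  rintro ⟨_, _, hmax⟩
  obtain ⟨p⟩ := hX.2 v hv w hw
  cases p with
  | nil => exact hvw rfl
  | @cons _ u _ h p =>
    have huv : u ≠ v := h.1.ne'
    have hP : Pb G {v, u} := by
      refine ⟨connOn_pair h.1, ?_⟩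
      rintro z (rfl | rfl) _
      · have : ({z, u} : Set V) \ {z} = {u} := by
          ext t; simp only [Set.mem_diff, Set.mem_insert_iff, Set.mem_singleton_iff]
          constructor
          · rintro ⟨rfl | rfl, ht⟩
            · exact (ht rfl).elim
            · rfl
          · rintro rfl; exact ⟨Or.inr rfl, huv⟩
        rw [this]; exact connOn_singleton G u
      · have : ({v, z} : Set V) \ {z} = {v} := by
          ext t; simp only [Set.mem_diff, Set.mem_insert_iff, Set.mem_singleton_iff]
          constructor
          · rintro ⟨rfl | rfl, ht⟩
            · rfl
            · exact (ht rfl).elim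
          · rintro rfl; exact ⟨Or.inl rfl, fun hh => huv hh.symm⟩
        rw [this]; exact connOn_singleton G v
    have heq := hmax {v, u} ?_ (by simp) hP
    · exact huv (by
        have : u ∈ ({v} : Set V) := heq ▸ (Or.inr rfl : u ∈ ({v, u} : Set V))
        exact this)
    · rintro z (rfl | rfl)
      · exact hv
      · exact h.2.2

lemma main [Fintype V] (G : SimpleGraph V) :
    ∀ (n : ℕ) (A : Set V), A.ncard ≤ n → ConnOn G A →
      Odd (A.ncard + {B : Set V | BlkOn G A B ∧ Even B.ncard}.ncard) := by
  intro n
  induction n with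
  | zero =>
    intro A hcard hA
    obtain ⟨x, hx⟩ := hA.1
    have : A.ncard = 0 := Nat.le_zero.1 hcard
    rw [(Set.ncard_eq_zero (Set.toFinite A)).1 this] at hx
    exact hx.elim
  | succ n ih =>
    intro A hcard hA
    by_cases hcase : ∀ v ∈ A, A = {v} ∨ ConnOn G (A \ {v})
    · -- `A` itself is the unique block
      have hAblk : BlkOn G A A :=
        ⟨subset_rfl, ⟨hA, fun v hv hne => (hcase v hv).resolve_left hne⟩,
          fun B' h1 h2 _ => h1.antisymm h2⟩
      have hb : ∀ B, BlkOn G A B ↔ B = A := by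
        intro B
        constructor
        · intro hB
          exact (hB.2.2 A subset_rfl hB.1 hAblk.2.1).symm
        · rintro rfl; exact hAblk
      by_cases hev : Even A.ncard
      · have hset : {B : Set V | BlkOn G A B ∧ Even B.ncard} = {A} := by
          ext B
          simp only [Set.mem_setOf_eq, Set.mem_singleton_iff, hb]
          constructor
          · exact fun h => h.1
          · rintro rfl; exact ⟨rfl, hev⟩
        rw [hset, Set.ncard_singleton]
        rcases hev with ⟨k, hk⟩
        exact ⟨k, by omega⟩
      · have hset : {B : Set V | BlkOn G A B ∧ Even B.ncard} = ∅ := by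
          ext B
          simp only [Set.mem_setOf_eq, Set.mem_empty_iff_false, iff_false, not_and, hb]
          rintro rfl; exact hev
        rw [hset, Set.ncard_empty]
        rw [Nat.add_zero]
        exact Nat.not_even_iff_odd.1 hev
    · -- there is a cut vertex `v`
      push_neg at hcase
      obtain ⟨v, hv, hneA, hnc⟩ := hcase
      have hAd : (A \ {v}).Nonempty := by
        by_contra hcon
        rw [Set.not_nonempty_iff_eq_empty, Set.diff_eq_empty] at hcon
        exact hneA (hcon.antisymm (Set.singleton_subset_iff.2 hv))
      rw [ConnOn, not_and] at hnc
      have hnc := hnc hAd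
      push_neg at hnc
      obtain ⟨a, ha, b, hb, hnr⟩ := hnc
      have haA : a ∈ A := ha.1
      have hav : a ≠ v := ha.2
      have hbA : b ∈ A := hb.1
      have hbv : b ≠ v := hb.2
      set H := Gr G (A \ {v}) with hH
      set C := {w | w ∈ A ∧ w ≠ v ∧ H.Reachable a w} with hC
      set A₁ := insert v C with hA1
      set A₂ := A \ C with hA2
      have haC : a ∈ C := ⟨haA, hav, Reachable.refl _⟩
      have hbC : b ∉ C := fun h => hnr h.2.2
      have hCA : C ⊆ A \ {v} := fun w hw => ⟨hw.1, hw.2.1⟩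
      have hA1A : A₁ ⊆ A := Set.insert_subset hv (hCA.trans Set.diff_subset)
      have hA2A : A₂ ⊆ A := Set.diff_subset
      have hvC : v ∉ C := fun h => h.2.1 rfl
      have hvA1 : v ∈ A₁ := Set.mem_insert _ _
      have hvA2 : v ∈ A₂ := ⟨hv, hvC⟩
      have haA1 : a ∈ A₁ := Set.mem_insert_of_mem _ haC
      have hbA2 : b ∈ A₂ := ⟨hbA, hbC⟩
      have hunion : A₁ ∪ A₂ = A := by
        ext w
        simp only [hA1, hA2, Set.mem_union, Set.mem_insert_iff, Set.mem_diff]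
        constructor
        · rintro (((rfl : w = v) | hwC) | hw)
          · exact hv
          · exact hwC.1
          · exact hw.1
        · intro hw
          by_cases hwC : w ∈ C
          · exact Or.inl (Or.inr hwC)
          · exact Or.inr ⟨hw, hwC⟩
      have hinter : A₁ ∩ A₂ = {v} := by
        ext w
        simp only [hA1, hA2, Set.mem_inter_iff, Set.mem_insert_iff, Set.mem_diff,
          Set.mem_singleton_iff]
        constructor
        · rintro ⟨(rfl : w = v) | hwC, _, hwC'⟩
          · rfl
          · exact (hwC' hwC).elim
        · rintro rfl
          exact ⟨Or.inl rfl, hv, hvC⟩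
      -- connectivity of the two pieces
      have hA1conn : ConnOn G A₁ := by
        have hub : ∀ x ∈ A₁, (Gr G A₁).Reachable x v := by
          rintro x hx
          rcases Set.mem_insert_iff.1 hx with rfl | hxC
          · exact Reachable.refl _
          · obtain ⟨q, hq⟩ := prefix_reach hA hxC.1 hv
            refine (reach_transfer q ?_).symm |>.symm
            intro w hw
            rcases hq w hw with rfl | ⟨hwA, hwv, hr⟩
            · exact hvA1
            · exact Set.mem_insert_of_mem _ ⟨hwA, hwv, hxC.2.2.trans hr⟩
        exact ⟨⟨v, hvA1⟩, fun x hx y hy => (hub x hx).trans (hub y hy).symm⟩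
      have hA2conn : ConnOn G A₂ := by
        have hub : ∀ x ∈ A₂, (Gr G A₂).Reachable x v := by
          rintro x ⟨hxA, hxC⟩
          by_cases hxv : x = v
          · subst hxv; exact Reachable.refl _
          · obtain ⟨q, hq⟩ := prefix_reach hA hxA hv
            refine reach_transfer q ?_
            intro w hw
            rcases hq w hw with rfl | ⟨hwA, hwv, hr⟩
            · exact hvA2
            · refine ⟨hwA, fun hwC => hxC ?_⟩
              exact ⟨hxA, hxv, hwC.2.2.trans hr.symm⟩
        exact ⟨⟨v, hvA2⟩, fun x hx y hy => (hub x hx).trans (hub y hy).symm⟩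
      -- every Pb subset of A lies in one of the pieces
      have hsplit : ∀ B, B ⊆ A → Pb G B → B ⊆ A₁ ∨ B ⊆ A₂ := by
        intro B hBA hPb
        by_contra hcon
        push_neg at hcon
        obtain ⟨x, hxB, hxA1⟩ := Set.not_subset.1 hcon.1
        obtain ⟨y, hyB, hyA2⟩ := Set.not_subset.1 hcon.2
        have hxv : x ≠ v := fun h => hxA1 (h ▸ hvA1)
        have hxC : x ∉ C := fun h => hxA1 (Set.mem_insert_of_mem _ h)
        have hyC : y ∈ C := by
          by_contra hyC
          exact hyA2 ⟨hBA hyB, hyC⟩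
        have hyv : y ≠ v := hyC.2.1
        have hconn : ConnOn G (B \ {v}) := by
          by_cases hvB : v ∈ B
          · refine hPb.2 v hvB (fun h => hxv ?_)
            rw [h] at hxB
            exact hxB
          · rw [Set.diff_singleton_eq_self hvB]
            exact hPb.1
        have hreach : H.Reachable x y := by
          have := hconn.2 x ⟨hxB, hxv⟩ y ⟨hyB, hyv⟩
          exact this.mono (Gr_mono G (Set.diff_subset_diff_left hBA))
        exact hxC ⟨hBA hxB, hxv, hyC.2.2.trans hreach.symm⟩
      -- blocks of A = blocks of A₁ ⊔ blocks of A₂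
      have hnb1 : ¬ BlkOn G A₁ {v} := singleton_not_blk hA1conn hvA1 haA1 hav
      have hnb2 : ¬ BlkOn G A₂ {v} := singleton_not_blk hA2conn hvA2 hbA2 hbv
      have hsingle : ∀ B : Set V, Pb G B → B ⊆ A₁ → B ⊆ A₂ → B = {v} := by
        intro B hPb h1 h2
        have : B ⊆ ({v} : Set V) := hinter ▸ Set.subset_inter h1 h2
        exact (Set.Nonempty.subset_singleton_iff hPb.1.1).1 this
      have hiff : ∀ B, BlkOn G A B ↔ (BlkOn G A₁ B ∨ BlkOn G A₂ B) := by
        intro B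
        constructor
        · rintro ⟨hBA, hPb, hmax⟩
          rcases hsplit B hBA hPb with h1 | h2
          · exact Or.inl ⟨h1, hPb, fun B' hB' hBB' hPb' =>
              hmax B' (hB'.trans hA1A) hBB' hPb'⟩
          · exact Or.inr ⟨h2, hPb, fun B' hB' hBB' hPb' =>
              hmax B' (hB'.trans hA2A) hBB' hPb'⟩
        · rintro (⟨hBA1, hPb, hmax⟩ | ⟨hBA2, hPb, hmax⟩)
          · refine ⟨hBA1.trans hA1A, hPb, ?_⟩
            intro B' hB'A hBB' hPb'
            rcases hsplit B' hB'A hPb' with h1 | h2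
            · exact hmax B' h1 hBB' hPb'
            · have hBv : B = {v} := hsingle B hPb hBA1 (hBB'.trans h2)
              exact absurd (hBv ▸ (⟨hBA1, hPb, hmax⟩ : BlkOn G A₁ B)) hnb1
          · refine ⟨hBA2.trans hA2A, hPb, ?_⟩
            intro B' hB'A hBB' hPb'
            rcases hsplit B' hB'A hPb' with h1 | h2
            · have hBv : B = {v} := hsingle B hPb (hBB'.trans h1) hBA2
              exact absurd (hBv ▸ (⟨hBA2, hPb, hmax⟩ : BlkOn G A₂ B)) hnb2
            · exact hmax B' h2 hBB' hPb'
      have hdisj : Disjoint {B : Set V | BlkOn G A₁ B ∧ Even B.ncard}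
          {B : Set V | BlkOn G A₂ B ∧ Even B.ncard} := by
        rw [Set.disjoint_left]
        rintro B ⟨hB1, _⟩ ⟨hB2, _⟩
        have hBv : B = {v} := hsingle B hB1.2.1 hB1.1 hB2.1
        exact hnb1 (hBv ▸ hB1)
      have hsetu : {B : Set V | BlkOn G A B ∧ Even B.ncard} =
          {B : Set V | BlkOn G A₁ B ∧ Even B.ncard} ∪
          {B : Set V | BlkOn G A₂ B ∧ Even B.ncard} := by
        ext B
        simp only [Set.mem_setOf_eq, Set.mem_union, hiff B]
        tauto
      -- cardinalities
      have hsum : A₁.ncard + A₂.ncard = A.ncard + 1 := by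
        have := Set.ncard_union_add_ncard_inter A₁ A₂
        rw [hunion, hinter, Set.ncard_singleton] at this
        omega
      have hbA1 : b ∉ A₁ := fun h => by
        rcases Set.mem_insert_iff.1 h with rfl | hbC'
        · exact hbv rfl
        · exact hbC hbC'
      have hA1lt : A₁.ncard < A.ncard :=
        Set.ncard_lt_ncard ⟨hA1A, fun hsub => hbA1 (hsub hbA)⟩ (Set.toFinite A)
      have hA2lt : A₂.ncard < A.ncard :=
        Set.ncard_lt_ncard ⟨hA2A, fun hsub => (hsub haA).2 haC⟩ (Set.toFinite A)
      have ih1 := ih A₁ (by omega) hA1conn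
      have ih2 := ih A₂ (by omega) hA2conn
      rw [hsetu, Set.ncard_union_eq hdisj (Set.toFinite _) (Set.toFinite _)]
      rw [Nat.odd_iff] at ih1 ih2 ⊢
      omega

end BlockParity

theorem card_add_even_blocks_odd {V : Type*} [Fintype V] (G : SimpleGraph V)
    (hconn : G.Connected) (r : ℕ)
    (hr : {B : Set V | IsBlock G B ∧ Even B.ncard}.ncard = r) :
    Odd (Fintype.card V + r) := by
  subst hr
  have hbridge : ∀ B : Set V, IsBlock G B ↔ BlockParity.BlkOn G Set.univ B := by
    intro B
    unfold IsBlock BlockParity.BlkOn BlockParity.Pb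
    simp only [BlockParity.induce_connected_iff]
    constructor
    · rintro ⟨h1, h2⟩
      exact ⟨Set.subset_univ B, h1, fun B' _ hBB' hPb' => h2 B' hBB' hPb'⟩
    · rintro ⟨_, h1, h2⟩
      exact ⟨h1, fun B' hBB' hPb' => h2 B' (Set.subset_univ B') hBB' hPb'⟩
  have : Nonempty V := hconn.nonempty
  have hconnOn : BlockParity.ConnOn G Set.univ := by
    refine ⟨Set.univ_nonempty, fun u _ v _ => ?_⟩
    exact (hconn.preconnected u v).mono (fun a b hab => ⟨hab, trivial, trivial⟩)
  have hmain := BlockParity.main G (Set.univ : Set V).ncard Set.univ le_rfl hconnOn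
  have hsets : {B : Set V | IsBlock G B ∧ Even B.ncard} =
      {B : Set V | BlockParity.BlkOn G Set.univ B ∧ Even B.ncard} := by
    ext B
    simp only [Set.mem_setOf_eq, hbridge]
  rw [hsets]
  have hcard : (Set.univ : Set V).ncard = Fintype.card V := by
    rw [Set.ncard_univ, Nat.card_eq_fintype_card]
  rwa [hcard] at hmain
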